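/- Let ε be an admissible function, let T = T(n,ε) ⊂ ℝⁿ be the corresponding thorn with coordinates (x₁,…,x_n), and let U ⊆ ℝ^{n+1} (with coordinates (x₀,x₁,…,x_n)) be an open set containing {0} × T, i.e., containing every point (0, x₁,…,x_n) with (x₁,…,x_n) ∈ T. Then there exists an admissible function ε₁ such that the (n+1)-dimensional thorn T(n+1,ε₁) = {(x₀,…,x_n) : 0 < x_n < ε₁(1) and 0 < x_k < ε₁(x_{k+1}) for 0 ≤ k ≤ n−1} is contained in U ∩ {(x₀,…,x_n) : x_i > 0 for all i}. -/

import Mathlib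

/-- A function `ε : [0,1] → ℝ` is admissible if `ε 0 = 0`, `ε` is increasing on
`[0,1]`, and `0 < ε x < x` for `x ∈ (0,1]`. -/
def Admissible (ε : ℝ → ℝ) : Prop :=
  ε 0 = 0 ∧ StrictMonoOn ε (Set.Icc 0 1) ∧
    ∀ x ∈ Set.Ioc (0 : ℝ) 1, 0 < ε x ∧ ε x < x

/-- The thorn `T(n, ε) ⊆ ℝⁿ`: the set of `(y₁, …, y_n)` with `0 < y_n < ε 1` and
`0 < y_k < ε y_{k+1}` for `1 ≤ k ≤ n - 1` (index `i : Fin n` represents `y_{i+1}`,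
so index `0` is the innermost coordinate). -/
def Thorn (n : ℕ) (ε : ℝ → ℝ) : Set (Fin n → ℝ) :=
  {y | ∀ i : Fin n, 0 < y i ∧
    y i < ε (if h : (i : ℕ) + 1 < n then y ⟨(i : ℕ) + 1, h⟩ else 1)}

lemma thorn_coord_lt_one {m : ℕ} {e : ℝ → ℝ} (he : Admissible e)
    {y : Fin m → ℝ} (hy : y ∈ Thorn m e) : ∀ i : Fin m, y i < 1 := by
  obtain ⟨h0, hmono, hlt⟩ := he
  suffices H : ∀ k, ∀ i : Fin m, (i : ℕ) + k + 1 = m → y i < 1 by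
    intro i; exact H (m - 1 - (i : ℕ)) i (by omega)
  intro k
  induction k with
  | zero =>
    intro i hi
    have h2 := (hy i).2
    rw [dif_neg (by omega)] at h2
    have h1 := hlt 1 ⟨one_pos, le_refl 1⟩
    linarith [h1.2]
  | succ k ih =>
    intro i hi
    have hlt2 : (i : ℕ) + 1 < m := by omega
    have h2 := (hy i).2
    rw [dif_pos hlt2] at h2
    have hnext : y ⟨(i : ℕ) + 1, hlt2⟩ < 1 := ih ⟨(i : ℕ) + 1, hlt2⟩ (by simp; omega)
    have hpos : 0 < y ⟨(i : ℕ) + 1, hlt2⟩ := (hy ⟨(i : ℕ) + 1, hlt2⟩).1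
    have := hlt _ ⟨hpos, le_of_lt hnext⟩
    linarith

/-- **Lemma 2.** If `U ⊆ ℝ^{n+1}` is an open set containing `{0} × T(n, ε)`
(the extra coordinate `x₀` being the innermost one), then `U` intersected with the
open positive orthant contains an `(n+1)`-dimensional thorn. -/
theorem thorn_in_half_neighborhood
    (n : ℕ) (ε : ℝ → ℝ) (hε : Admissible ε)
    (U : Set (Fin (n + 1) → ℝ)) (hU : IsOpen U)
    (hTU : ∀ x ∈ Thorn n ε, Fin.cons 0 x ∈ U) :
    ∃ ε₁ : ℝ → ℝ, Admissible ε₁ ∧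
      Thorn (n + 1) ε₁ ⊆ U ∩ {p : Fin (n + 1) → ℝ | ∀ i, 0 < p i} := by
  obtain ⟨hε0, hεmono, hεlt⟩ := hε
  have hεmonoOn : MonotoneOn ε (Set.Icc 0 1) := hεmono.monotoneOn
  -- the shrunken admissible function
  set e2 : ℝ → ℝ := fun x => ε (x / 2) with he2def
  have he2Adm : Admissible e2 := by
    refine ⟨by show ε (0 / 2) = 0; norm_num [hε0], ?_, ?_⟩
    · intro a ha b hb hab
      exact hεmono ⟨by linarith [ha.1], by linarith [ha.2]⟩
        ⟨by linarith [hb.1], by linarith [hb.2]⟩ (by linarith)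
    · intro x hx
      have h := hεlt (x / 2) ⟨by linarith [hx.1], by linarith [hx.2]⟩
      exact ⟨h.1, by linarith [h.2]⟩
  -- the truncated shrunken thorns and their closures
  set C : ℝ → Set (Fin n → ℝ) := fun t => {y | y ∈ Thorn n e2 ∧ ∀ i, t ≤ y i} with hCdef
  set K : ℝ → Set (Fin n → ℝ) := fun t => closure (C t) with hKdef
  have hCanti : ∀ s t : ℝ, s ≤ t → C t ⊆ C s := by
    intro s t hst y hy
    exact ⟨hy.1, fun i => le_trans hst (hy.2 i)⟩
  have hCIcc : ∀ t, C t ⊆ Set.Icc (0 : Fin n → ℝ) 1 := by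
    intro t y hy
    constructor
    · intro i; exact le_of_lt (hy.1 i).1
    · intro i; exact le_of_lt (thorn_coord_lt_one he2Adm hy.1 i)
  have hKcomp : ∀ t, IsCompact (K t) := by
    intro t
    exact isCompact_Icc.of_isClosed_subset isClosed_closure
      (closure_minimal (hCIcc t) isClosed_Icc)
  -- the closure of C t is contained in the ε-thorn for t > 0
  have hKsub : ∀ t : ℝ, 0 < t → K t ⊆ Thorn n ε := by
    intro t ht y hy
    have happrox : ∀ δ : ℝ, 0 < δ → ∃ z ∈ C t, ∀ j, |y j - z j| < δ := by
      intro δ hδ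
      rw [hKdef, Metric.mem_closure_iff] at hy
      obtain ⟨z, hz, hd⟩ := hy δ hδ
      refine ⟨z, hz, fun j => lt_of_le_of_lt ?_ hd⟩
      have := dist_le_pi_dist y z j
      rwa [Real.dist_eq] at this
    have hyt : ∀ j, t ≤ y j := by
      intro j
      by_contra hcon
      push_neg at hcon
      obtain ⟨z, hz, hd⟩ := happrox (t - y j) (by linarith)
      have h1 := (abs_lt.1 (hd j)).1
      have h2 := hz.2 j
      linarith
    have hy1 : ∀ j, y j ≤ 1 := by
      intro j
      refine le_of_forall_pos_le_add (fun δ hδ => ?_)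
      obtain ⟨z, hz, hd⟩ := happrox δ hδ
      have h1 := thorn_coord_lt_one he2Adm hz.1 j
      have := (abs_lt.1 (hd j)).2
      linarith
    intro i
    refine ⟨lt_of_lt_of_le ht (hyt i), ?_⟩
    by_cases h : (i : ℕ) + 1 < n
    · rw [dif_pos h]
      set s : ℝ := y ⟨(i : ℕ) + 1, h⟩ with hsdef
      have hs_pos : 0 < s := lt_of_lt_of_le ht (hyt _)
      have hs1 : s ≤ 1 := hy1 _
      have key : y i ≤ ε (3 * s / 4) := by
        refine le_of_forall_pos_le_add (fun δ hδ => ?_)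
        obtain ⟨z, hz, hd⟩ := happrox (min δ (s / 2)) (lt_min hδ (by linarith))
        have hz2 := (hz.1 i).2
        rw [dif_pos h] at hz2
        have hz1pos : 0 < z ⟨(i : ℕ) + 1, h⟩ := (hz.1 ⟨(i : ℕ) + 1, h⟩).1
        have hz1lt : z ⟨(i : ℕ) + 1, h⟩ < 1 := thorn_coord_lt_one he2Adm hz.1 _
        have hdz : z ⟨(i : ℕ) + 1, h⟩ ≤ s + s / 2 := by
          have := (abs_lt.1 (hd ⟨(i : ℕ) + 1, h⟩)).1
          have hmin : min δ (s / 2) ≤ s / 2 := min_le_right _ _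
          linarith
        have harg : z ⟨(i : ℕ) + 1, h⟩ / 2 ≤ 3 * s / 4 := by linarith
        have hmono2 : ε (z ⟨(i : ℕ) + 1, h⟩ / 2) ≤ ε (3 * s / 4) :=
          hεmonoOn ⟨by linarith, by linarith⟩ ⟨by linarith, by linarith⟩ harg
        have hyd := (abs_lt.1 (hd i)).2
        have hmin : min δ (s / 2) ≤ δ := min_le_left _ _
        simp only [he2def] at hz2
        linarith
      have : ε (3 * s / 4) < ε s :=
        hεmono ⟨by linarith, by linarith⟩ ⟨by linarith, hs1⟩ (by linarith)
      linarith
    · rw [dif_neg h]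
      have key : y i ≤ ε (1 / 2) := by
        refine le_of_forall_pos_le_add (fun δ hδ => ?_)
        obtain ⟨z, hz, hd⟩ := happrox δ hδ
        have hz2 := (hz.1 i).2
        rw [dif_neg h] at hz2
        have := (abs_lt.1 (hd i)).2
        simp only [he2def] at hz2
        linarith
      have : ε (1 / 2) < ε 1 :=
        hεmono ⟨by norm_num, by norm_num⟩ ⟨by norm_num, le_refl 1⟩ (by norm_num)
      linarith
  -- continuity of the embedding y ↦ (0, y)
  have hcons : Continuous (fun y : Fin n → ℝ => (Fin.cons 0 y : Fin (n + 1) → ℝ)) := by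
    refine continuous_pi (fun j => ?_)
    refine Fin.cases ?_ ?_ j
    · simpa using continuous_const
    · intro i
      simpa using continuous_apply i
  -- the modulus function ρ
  set ρ : ℝ → ENNReal := fun t => ⨅ y ∈ K t, EMetric.infEdist (Fin.cons 0 y) Uᶜ with hρdef
  have hρmono : ∀ s t : ℝ, s ≤ t → ρ s ≤ ρ t := by
    intro s t hst
    refine le_iInf₂ (fun y hy => ?_)
    exact iInf₂_le y (closure_mono (hCanti s t hst) hy)
  have hρpos : ∀ t : ℝ, 0 < t → 0 < ρ t := by
    intro t ht
    have hKU : (fun y : Fin n → ℝ => (Fin.cons 0 y : Fin (n + 1) → ℝ)) '' K t ⊆ U := by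
      rintro _ ⟨y, hy, rfl⟩
      exact hTU y (hKsub t ht hy)
    obtain ⟨δ, hδpos, hδ⟩ := ((hKcomp t).image hcons).exists_thickening_subset_open hU hKU
    refine lt_of_lt_of_le (b := ENNReal.ofReal δ) (ENNReal.ofReal_pos.2 hδpos)
      (le_iInf₂ (fun y hy => ?_))
    refine EMetric.le_infEdist.2 ?_
    intro z hz
    have hznot : z ∉ Metric.thickening δ
        ((fun y : Fin n → ℝ => (Fin.cons 0 y : Fin (n + 1) → ℝ)) '' K t) :=
      fun hmem => hz (hδ hmem)
    rw [Metric.mem_thickening_iff_infEdist_lt, not_lt] at hznot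
    calc ENNReal.ofReal δ ≤ EMetric.infEdist z _ := hznot
      _ ≤ edist z (Fin.cons 0 y) := EMetric.infEdist_le_edist_of_mem ⟨y, hy, rfl⟩
      _ = edist (Fin.cons 0 y) z := edist_comm _ _
  -- the radius function r
  set r : ℝ → ℝ := fun t => (min (ρ t) 1).toReal with hrdef
  have hrnetop : ∀ t : ℝ, min (ρ t) 1 ≠ ⊤ :=
    fun t => ne_top_of_le_ne_top ENNReal.one_ne_top (min_le_right _ _)
  have hrmono : ∀ s t : ℝ, s ≤ t → r s ≤ r t := by
    intro s t hst
    exact ENNReal.toReal_mono (hrnetop t) (min_le_min (hρmono s t hst) le_rfl)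
  have hrpos : ∀ t : ℝ, 0 < t → 0 < r t := by
    intro t ht
    exact ENNReal.toReal_pos (ne_of_gt (lt_min (hρpos t ht) one_pos)) (hrnetop t)
  have hrnonneg : ∀ t : ℝ, 0 ≤ r t := fun t => ENNReal.toReal_nonneg
  -- the new admissible function
  set ε₁ : ℝ → ℝ := fun x => if 0 < x then x * min (ε (x / 2)) (r x) else 0 with hε₁def
  have hmin_pos : ∀ x : ℝ, 0 < x → x ≤ 1 → 0 < min (ε (x / 2)) (r x) := by
    intro x hx hx1
    exact lt_min (hεlt (x / 2) ⟨by linarith, by linarith⟩).1 (hrpos x hx)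
  have hmin_mono : ∀ a b : ℝ, 0 < a → a ≤ b → b ≤ 1 →
      min (ε (a / 2)) (r a) ≤ min (ε (b / 2)) (r b) := by
    intro a b ha hab hb1
    refine min_le_min ?_ (hrmono a b hab)
    exact hεmonoOn ⟨by linarith, by linarith⟩ ⟨by linarith, by linarith⟩ (by linarith)
  have hε₁val : ∀ x : ℝ, 0 < x → ε₁ x = x * min (ε (x / 2)) (r x) := by
    intro x hx; simp [hε₁def, hx]
  have hε₁Adm : Admissible ε₁ := by
    refine ⟨by simp [hε₁def], ?_, ?_⟩
    · intro a ha b hb hab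
      rcases eq_or_lt_of_le ha.1 with h0 | h0
      · have hb0 : 0 < b := by rw [← h0] at hab; exact hab
        rw [← h0]
        rw [hε₁val b hb0]
        simp only [hε₁def, lt_irrefl, if_neg (lt_irrefl (0:ℝ))]
        exact mul_pos hb0 (hmin_pos b hb0 hb.2)
      · rw [hε₁val a h0, hε₁val b (lt_trans h0 hab)]
        have h1 : min (ε (a / 2)) (r a) ≤ min (ε (b / 2)) (r b) :=
          hmin_mono a b h0 (le_of_lt hab) hb.2
        have h2 : 0 < min (ε (b / 2)) (r b) := hmin_pos b (lt_trans h0 hab) hb.2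
        calc a * min (ε (a / 2)) (r a) ≤ a * min (ε (b / 2)) (r b) :=
              mul_le_mul_of_nonneg_left h1 (le_of_lt h0)
          _ < b * min (ε (b / 2)) (r b) := mul_lt_mul_of_pos_right hab h2
    · intro x hx
      rw [hε₁val x hx.1]
      constructor
      · exact mul_pos hx.1 (hmin_pos x hx.1 hx.2)
      · have h1 : min (ε (x / 2)) (r x) ≤ ε (x / 2) := min_le_left _ _
        have h2 := hεlt (x / 2) ⟨by linarith [hx.1], by linarith [hx.2]⟩
        nlinarith [hx.1, hx.2, h2.2]
  have hε₁_le_e2 : ∀ v : ℝ, 0 < v → v ≤ 1 → ε₁ v ≤ ε (v / 2) := by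
    intro v hv hv1
    rw [hε₁val v hv]
    have h1 : min (ε (v / 2)) (r v) ≤ ε (v / 2) := min_le_left _ _
    have h2 : 0 < ε (v / 2) := (hεlt (v / 2) ⟨by linarith, by linarith⟩).1
    nlinarith
  have hε₁_le_r : ∀ v : ℝ, 0 < v → v ≤ 1 → ε₁ v ≤ r v := by
    intro v hv hv1
    rw [hε₁val v hv]
    have h1 : min (ε (v / 2)) (r v) ≤ r v := min_le_right _ _
    nlinarith [hrnonneg v]
  refine ⟨ε₁, hε₁Adm, ?_⟩
  intro p hp
  have hppos : ∀ i, 0 < p i := fun i => (hp i).1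
  have hplt1 : ∀ i, p i < 1 := thorn_coord_lt_one hε₁Adm hp
  -- p is strictly monotone along coordinates
  have hpmono : StrictMono p := by
    rw [Fin.strictMono_iff_lt_succ]
    intro i
    have h2 := (hp i.castSucc).2
    have hcond : ((i.castSucc : Fin (n + 1)) : ℕ) + 1 < n + 1 := by
      simp only [Fin.coe_castSucc]
      omega
    rw [dif_pos hcond] at h2
    have heq : (⟨((i.castSucc : Fin (n + 1)) : ℕ) + 1, hcond⟩ : Fin (n + 1)) = i.succ := by
      apply Fin.ext; simp
    rw [heq] at h2
    have := (hε₁Adm.2.2 (p i.succ) ⟨hppos i.succ, le_of_lt (hplt1 i.succ)⟩).2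
    linarith
  -- the key threshold t
  set t : ℝ := if h : ((0 : Fin (n + 1)) : ℕ) + 1 < n + 1
      then p ⟨((0 : Fin (n + 1)) : ℕ) + 1, h⟩ else 1 with htdef
  have hx0 : p 0 < ε₁ t := by
    have := (hp 0).2
    rwa [← htdef] at this
  have htpos : 0 < t := by
    rw [htdef]
    split
    · exact hppos _
    · norm_num
  have htle1 : t ≤ 1 := by
    rw [htdef]
    split
    · exact le_of_lt (hplt1 _)
    · exact le_refl 1
  have htail : ∀ i : Fin n, t ≤ p i.succ := by
    intro i
    have hi := i.isLt
    have hcond : ((0 : Fin (n + 1)) : ℕ) + 1 < n + 1 := by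
      simp only [Fin.val_zero]; omega
    rw [htdef, dif_pos hcond]
    have : (⟨((0 : Fin (n + 1)) : ℕ) + 1, hcond⟩ : Fin (n + 1)) ≤ i.succ := by
      rw [Fin.le_def]; simp
    exact hpmono.monotone this
  -- tail p lies in C t
  have htailC : Fin.tail p ∈ C t := by
    refine ⟨fun i => ?_, fun i => htail i⟩
    refine ⟨hppos i.succ, ?_⟩
    have h2 := (hp i.succ).2
    by_cases h : (i : ℕ) + 1 < n
    · rw [dif_pos h]
      have hcond : ((i.succ : Fin (n + 1)) : ℕ) + 1 < n + 1 := by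
        simp only [Fin.val_succ]; omega
      rw [dif_pos hcond] at h2
      have heq : Fin.tail p ⟨(i : ℕ) + 1, h⟩
          = p ⟨((i.succ : Fin (n + 1)) : ℕ) + 1, hcond⟩ := by
        show p (⟨(i : ℕ) + 1, h⟩ : Fin n).succ = _
        congr 1
      rw [heq]
      set v : ℝ := p ⟨((i.succ : Fin (n + 1)) : ℕ) + 1, hcond⟩ with hvdef
      have hvpos : 0 < v := hppos _
      have hv1 : v ≤ 1 := le_of_lt (hplt1 _)
      calc Fin.tail p i = p i.succ := rfl
        _ < ε₁ v := h2
        _ ≤ ε (v / 2) := hε₁_le_e2 v hvpos hv1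
    · rw [dif_neg h]
      have hcond : ¬ ((i.succ : Fin (n + 1)) : ℕ) + 1 < n + 1 := by
        simp only [Fin.val_succ]; omega
      rw [dif_neg hcond] at h2
      calc Fin.tail p i = p i.succ := rfl
        _ < ε₁ 1 := h2
        _ ≤ ε (1 / 2) := hε₁_le_e2 1 one_pos le_rfl
  -- conclude
  have hyK : Fin.tail p ∈ K t := subset_closure htailC
  have hbound : ENNReal.ofReal (p 0) < EMetric.infEdist (Fin.cons 0 (Fin.tail p)) Uᶜ := by
    have h1 : p 0 < r t := lt_of_lt_of_le hx0 (hε₁_le_r t htpos htle1)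
    have h2 : ENNReal.ofReal (p 0) < min (ρ t) 1 := by
      rw [ENNReal.ofReal_lt_iff_lt_toReal (le_of_lt (hppos 0)) (hrnetop t)]
      exact h1
    calc ENNReal.ofReal (p 0) < min (ρ t) 1 := h2
      _ ≤ ρ t := min_le_left _ _
      _ ≤ EMetric.infEdist (Fin.cons 0 (Fin.tail p)) Uᶜ := iInf₂_le _ hyK
  have hpU : p ∈ U := by
    by_contra hcon
    have hdist : dist (Fin.cons 0 (Fin.tail p) : Fin (n + 1) → ℝ) p ≤ p 0 := by
      rw [dist_pi_le_iff (le_of_lt (hppos 0))]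
      intro j
      refine Fin.cases ?_ ?_ j
      · rw [show (Fin.cons 0 (Fin.tail p) : Fin (n + 1) → ℝ) 0 = 0 from Fin.cons_zero _ _]
        rw [Real.dist_eq]
        rw [abs_of_nonpos (by linarith [hppos 0])]
        linarith
      · intro i
        rw [show (Fin.cons 0 (Fin.tail p) : Fin (n + 1) → ℝ) i.succ = Fin.tail p i
          from Fin.cons_succ _ _ _]
        rw [show Fin.tail p i = p i.succ from rfl, dist_self]
        exact le_of_lt (hppos 0)
    have h3 : EMetric.infEdist (Fin.cons 0 (Fin.tail p)) Uᶜ ≤ ENNReal.ofReal (p 0) := by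
      calc EMetric.infEdist (Fin.cons 0 (Fin.tail p)) Uᶜ
          ≤ edist (Fin.cons 0 (Fin.tail p)) p := EMetric.infEdist_le_edist_of_mem hcon
        _ = ENNReal.ofReal (dist (Fin.cons 0 (Fin.tail p)) p) := edist_dist _ _
        _ ≤ ENNReal.ofReal (p 0) := ENNReal.ofReal_le_ofReal hdist
    exact absurd hbound (not_lt.2 h3)
  exact ⟨hpU, hppos⟩
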